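/- Let G be a topological group, S ⊆ G a closed subsemigroup with e ∈ S such that e is a cluster point of the interior of S in G. Then the paratopological group (G, τ_S) with the cone topology is saturated: for every τ_S-neighborhood U of e, the set U⁻¹ has nonempty τ_S-interior. -/

import Mathlib

open Set

/-- The cone topology on a topological group `G` determined by a subsemigroup `S ∋ 1`:
a set `U` is open iff each of its points `x` has a neighborhood of the form `x * (W ∩ S)`
inside `U`, where `W` is an open neighborhood of the identity in the original topology. -/
def coneTop {G : Type*} [Group G] [TopologicalSpace G] (S : Set G) : TopologicalSpace G where
  IsOpen U := ∀ x ∈ U, ∃ W : Set G, IsOpen W ∧ (1 : G) ∈ W ∧ (fun w => x * w) '' (W ∩ S) ⊆ U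
  isOpen_univ := fun x _ => ⟨univ, isOpen_univ, mem_univ _, fun _ _ => mem_univ _⟩
  isOpen_inter := by
    intro U V hU hV x hx
    obtain ⟨W₁, hW₁, h1W₁, hsub₁⟩ := hU x hx.1
    obtain ⟨W₂, hW₂, h1W₂, hsub₂⟩ := hV x hx.2
    refine ⟨W₁ ∩ W₂, hW₁.inter hW₂, ⟨h1W₁, h1W₂⟩, ?_⟩
    rintro y ⟨w, ⟨⟨hw₁, hw₂⟩, hwS⟩, rfl⟩
    exact ⟨hsub₁ ⟨w, ⟨hw₁, hwS⟩, rfl⟩, hsub₂ ⟨w, ⟨hw₂, hwS⟩, rfl⟩⟩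
  isOpen_sUnion := by
    intro 𝒮 h x hx
    obtain ⟨U, hU, hxU⟩ := hx
    obtain ⟨W, hW, h1W, hsub⟩ := h U hU x hxU
    exact ⟨W, hW, h1W, hsub.trans (subset_sUnion_of_mem hU)⟩

/-- If `S` is a closed subsemigroup of a topological group `G` with `1 ∈ S` such that `1` is
a cluster (accumulation) point of the interior of `S`, then the paratopological group
`(G, τ_S)` with the cone topology is saturated: for every `τ_S`-neighborhood `U` of the
identity, `U⁻¹` has nonempty `τ_S`-interior. -/
theorem stmt_17 {G : Type*} [Group G] [TopologicalSpace G] [IsTopologicalGroup G]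
    (S : Set G) (hS : IsClosed S) (hmul : ∀ a ∈ S, ∀ b ∈ S, a * b ∈ S) (h1 : (1 : G) ∈ S)
    (hacc : AccPt (1 : G) (Filter.principal (interior S))) :
    ∀ U ∈ @nhds G (coneTop S) 1, (@interior G (coneTop S) U⁻¹).Nonempty := by
  intro U hU
  obtain ⟨t, htU, hto, h1t⟩ := (@mem_nhds_iff G (x := 1) (s := U) (coneTop S)).mp hU
  obtain ⟨W, hWo, h1W, hWt⟩ := hto 1 h1t
  obtain ⟨s, ⟨hsW, hsint⟩, -⟩ := accPt_iff_nhds.mp hacc W (hWo.mem_nhds h1W)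
  have hWS : W ∩ S ⊆ U := fun w hw => htU (hWt ⟨w, hw, one_mul w⟩)
  set I : Set G :=
    {x | ∃ V : Set G, IsOpen V ∧ (1 : G) ∈ V ∧ (fun w => x * w) '' (V ∩ S) ⊆ U⁻¹} with hI
  have hIopen : @IsOpen G (coneTop S) I := by
    intro x hx
    obtain ⟨V, hVo, h1V, hVsub⟩ := hx
    refine ⟨V, hVo, h1V, ?_⟩
    rintro y ⟨w, ⟨hwV, hwS⟩, rfl⟩
    refine ⟨(fun v => w * v) ⁻¹' V, hVo.preimage (continuous_mul_left w), by simpa using hwV, ?_⟩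
    rintro z ⟨v, ⟨hvV, hvS⟩, rfl⟩
    exact hVsub ⟨w * v, ⟨hvV, hmul w hwS v hvS⟩, by simp [mul_assoc]⟩
  have hIsub : I ⊆ U⁻¹ := by
    rintro x ⟨V, hVo, h1V, hVsub⟩
    exact hVsub ⟨1, ⟨h1V, h1⟩, mul_one x⟩
  have hsI : s⁻¹ ∈ I := by
    refine ⟨(fun w => w⁻¹ * s) ⁻¹' (W ∩ interior S),
      (hWo.inter isOpen_interior).preimage (by continuity), by simpa using ⟨hsW, hsint⟩, ?_⟩
    rintro z ⟨w, ⟨hwW', hwS⟩, rfl⟩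
    have hwU : w⁻¹ * s ∈ U := hWS ⟨hwW'.1, interior_subset hwW'.2⟩
    simpa [Set.mem_inv, mul_inv_rev] using hwU
  exact ⟨s⁻¹, (@mem_interior G (coneTop S) _ _).mpr ⟨I, hIsub, hIopen, hsI⟩⟩
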